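/- The angular Kronecker constant of the set {1, 2, 3} equals 1/4; that is, α({1,2,3}) = 1/4. -/

import Mathlib

/-- Distance from a real number to the nearest integer. -/
noncomputable def distNearestInt (t : ℝ) : ℝ := ⨅ k : ℤ, |t - (k : ℝ)|

/-- The angular Kronecker constant of a finite set of integers: the infimum of all `ε ≥ 0`
such that every target `φ : ℤ → ℝ` can be interpolated to within `ε` (in the distance to the
nearest integer) by some `x ∈ ℝ` on the set `S`. -/
noncomputable def angularKronecker (S : Finset ℤ) : ℝ :=
  sInf {ε : ℝ | 0 ≤ ε ∧ ∀ φ : ℤ → ℝ, ∃ x : ℝ, ∀ n ∈ S, distNearestInt ((n : ℝ) * x - φ n) ≤ ε}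

lemma dni_le {t ε : ℝ} (k : ℤ) (h : |t - (k:ℝ)| ≤ ε) : distNearestInt t ≤ ε := by
  unfold distNearestInt
  refine le_trans (ciInf_le ?_ k) h
  exact ⟨0, by rintro y ⟨j, rfl⟩; exact abs_nonneg _⟩

lemma dni_eq (t : ℝ) : distNearestInt t = |t - round t| := by
  apply le_antisymm (dni_le (round t) le_rfl)
  unfold distNearestInt
  apply le_ciInf
  intro k
  rcases eq_or_ne k (round t) with rfl | hk
  · exact le_rfl
  · have h1 : (1:ℝ) ≤ |(round t : ℝ) - (k:ℝ)| := by
      have hne : round t - k ≠ 0 := sub_ne_zero.mpr (Ne.symm hk)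
      have := Int.one_le_abs hne
      calc (1:ℝ) = ((1:ℤ):ℝ) := by norm_num
        _ ≤ ((|round t - k| : ℤ) : ℝ) := by exact_mod_cast this
        _ = |(round t : ℝ) - (k:ℝ)| := by push_cast; rfl
    have h2 : |t - round t| ≤ 1/2 := abs_sub_round t
    have h3 : |(round t:ℝ) - k| ≤ |(round t:ℝ) - t| + |t - k| := abs_sub_le _ _ _
    rw [abs_sub_comm (round t:ℝ) t] at h3
    linarith

lemma dni_le_half (t : ℝ) : distNearestInt t ≤ 1/2 := by
  rw [dni_eq]; exact abs_sub_round t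

lemma dni_int (u : ℝ) (m : ℤ) : distNearestInt (u + m) = distNearestInt u := by
  rw [dni_eq, dni_eq, round_add_intCast]
  congr 1
  push_cast
  ring

lemma dni_neg (u : ℝ) : distNearestInt (-u) = distNearestInt u := by
  unfold distNearestInt
  rw [iInf, iInf]
  congr 1
  ext y
  constructor
  · rintro ⟨k, rfl⟩
    exact ⟨-k, by push_cast; rw [← abs_neg]; ring_nf⟩
  · rintro ⟨k, rfl⟩
    exact ⟨-k, by push_cast; rw [← abs_neg]; ring_nf⟩

lemma third (L c : ℝ) : ∃ v : ℝ, ∃ k : ℤ, L ≤ v ∧ v ≤ L + 1/2 ∧ |v - c - (k:ℝ)| ≤ 1/4 := by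
  have h0 : 0 ≤ Int.fract (c - L) := Int.fract_nonneg _
  have h1 : Int.fract (c - L) < 1 := Int.fract_lt_one _
  have hc : c - L = (⌊c - L⌋ : ℝ) + Int.fract (c - L) := (Int.floor_add_fract _).symm
  by_cases hδ : Int.fract (c - L) ≤ 3/4
  · rcases le_total (Int.fract (c - L)) (1/2) with h | h
    · refine ⟨L + Int.fract (c - L), -⌊c - L⌋, by linarith, by linarith, ?_⟩
      push_cast
      rw [abs_le]
      constructor <;> linarith
    · refine ⟨L + 1/2, -⌊c - L⌋, by linarith, le_rfl, ?_⟩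
      push_cast
      rw [abs_le]
      constructor <;> linarith
  · refine ⟨L, -⌊c - L⌋ - 1, le_rfl, by linarith, ?_⟩
    push_cast
    rw [abs_le]
    constructor <;> linarith

lemma main_lemma (b c : ℝ) (hb0 : 0 ≤ b) (hb : b ≤ 1/2) :
    ∃ t, distNearestInt t ≤ 1/4 ∧ distNearestInt (2*t - b) ≤ 1/4 ∧
      distNearestInt (3*t - c) ≤ 1/4 := by
  by_cases hβ : b ≤ 1/4
  · obtain ⟨v, k, hv1, hv2, hvk⟩ := third (3*b/2 - 1/4) c
    refine ⟨v/3, dni_le 0 ?_, dni_le 0 ?_, dni_le k ?_⟩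
    · push_cast; rw [abs_le]; constructor <;> linarith
    · push_cast; rw [abs_le]; constructor <;> linarith
    · have h : 3*(v/3) - c - (k:ℝ) = v - c - k := by ring
      rw [h]; exact hvk
  · push_neg at hβ
    obtain ⟨v, k, hv1, hv2, hvk⟩ := third (1/4) c
    by_cases hbr : 3*b/2 - 3/8 ≤ v
    · refine ⟨v/3, dni_le 0 ?_, dni_le 0 ?_, dni_le k ?_⟩
      · push_cast; rw [abs_le]; constructor <;> linarith
      · push_cast; rw [abs_le]; constructor <;> linarith
      · have h : 3*(v/3) - c - (k:ℝ) = v - c - k := by ring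
        rw [h]; exact hvk
    · push_neg at hbr
      refine ⟨(v-1)/3, dni_le 0 ?_, dni_le (-1) ?_, dni_le (k-1) ?_⟩
      · push_cast; rw [abs_le]; constructor <;> linarith
      · push_cast; rw [abs_le]; constructor <;> linarith
      · have h : 3*((v-1)/3) - c - ((k:ℝ) - 1) = v - c - k := by ring
        push_cast
        rw [h]; exact hvk

lemma key (b c : ℝ) : ∃ t, distNearestInt t ≤ 1/4 ∧ distNearestInt (2*t - b) ≤ 1/4 ∧
    distNearestInt (3*t - c) ≤ 1/4 := by
  have hm : |b - round b| ≤ 1/2 := abs_sub_round b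
  rw [abs_le] at hm
  rcases le_total 0 (b - round b) with h | h
  · obtain ⟨t, h1, h2, h3⟩ := main_lemma (b - round b) c h (by linarith [hm.2])
    refine ⟨t, h1, ?_, h3⟩
    have he : 2*t - b = (2*t - (b - round b)) + ((-round b : ℤ) : ℝ) := by push_cast; ring
    rw [he, dni_int]; exact h2
  · obtain ⟨t, h1, h2, h3⟩ := main_lemma ((round b : ℝ) - b) (-c) (by linarith) (by linarith [hm.1])
    refine ⟨-t, ?_, ?_, ?_⟩
    · rw [dni_neg]; exact h1
    · have he : 2*(-t) - b = -(2*t - ((round b : ℝ) - b)) + ((-round b : ℤ) : ℝ) := by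
        push_cast; ring
      rw [he, dni_int, dni_neg]; exact h2
    · have he : 3*(-t) - c = -(3*t - (-c)) := by ring
      rw [he, dni_neg]; exact h3

theorem alpha_one_two_three : angularKronecker {1, 2, 3} = 1 / 4 := by
  unfold angularKronecker
  apply le_antisymm
  · apply csInf_le ⟨0, fun ε hε => hε.1⟩
    refine ⟨by norm_num, fun φ => ?_⟩
    obtain ⟨t, h1, h2, h3⟩ := key (φ 2 - 2 * φ 1) (φ 3 - 3 * φ 1)
    refine ⟨φ 1 + t, ?_⟩
    intro n hn
    fin_cases hn
    · have he : ((1:ℤ):ℝ) * (φ 1 + t) - φ 1 = t := by push_cast; ring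
      rw [he]; exact h1
    · have he : ((2:ℤ):ℝ) * (φ 1 + t) - φ 2 = 2*t - (φ 2 - 2 * φ 1) := by push_cast; ring
      rw [he]; exact h2
    · have he : ((3:ℤ):ℝ) * (φ 1 + t) - φ 3 = 3*t - (φ 3 - 3 * φ 1) := by push_cast; ring
      rw [he]; exact h3
  · apply le_csInf
    · exact ⟨1/2, by norm_num, fun φ => ⟨0, fun n _ => dni_le_half _⟩⟩
    · rintro ε ⟨hε0, hε⟩
      by_contra hlt
      push_neg at hlt
      obtain ⟨x, hx⟩ := hε (fun n => if n = 2 then 1/2 else 0)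
      have h1 := hx 1 (by simp)
      have h2 := hx 2 (by simp)
      have h3 := hx 3 (by simp)
      norm_num at h1 h2 h3
      rw [dni_eq] at h1 h2 h3
      set k1 := round x with hk1
      set k2 := round (2*x - 1/2) with hk2
      set k3 := round (3*x) with hk3
      have e2 : (2:ℝ)*x - 1/2 - k2 = 2*(x - k1) - 1/2 - ((k2 - 2*k1 : ℤ) : ℝ) := by
        push_cast; ring
      have e3 : (3:ℝ)*x - k3 = 3*(x - k1) - ((k3 - 3*k1 : ℤ) : ℝ) := by
        push_cast; ring
      rw [abs_le] at h1 h2 h3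
      -- bounds on M = k2 - 2*k1
      have hMub : ((k2 - 2*k1 : ℤ):ℝ) < 1 := by push_cast; linarith [h1.1, h1.2, h2.1, h2.2]
      have hMlb : (-2 : ℝ) < ((k2 - 2*k1 : ℤ):ℝ) := by push_cast; linarith [h1.1, h1.2, h2.1, h2.2]
      have hM1 : k2 - 2*k1 < 1 := by exact_mod_cast hMub
      have hM2 : -2 < k2 - 2*k1 := by exact_mod_cast hMlb
      have hM : k2 - 2*k1 = 0 ∨ k2 - 2*k1 = -1 := by omega
      rcases hM with hM | hM
      · have hce : (k2:ℝ) = 2*(k1:ℝ) := by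
          have := congrArg (fun z : ℤ => (z : ℝ)) hM
          push_cast at this
          linarith
        have hs : x - (k1:ℝ) > 1/8 := by linarith [h2.1]
        have hNub : ((k3 - 3*k1 : ℤ):ℝ) < 1 := by push_cast; linarith [h1.2, h3.2]
        have hNlb : (0 : ℝ) < ((k3 - 3*k1 : ℤ):ℝ) := by push_cast; linarith [h3.1]
        have hN1 : k3 - 3*k1 < 1 := by exact_mod_cast hNub
        have hN2 : 0 < k3 - 3*k1 := by exact_mod_cast hNlb
        omega
      · have hce : (k2:ℝ) = 2*(k1:ℝ) - 1 := by
          have := congrArg (fun z : ℤ => (z : ℝ)) hM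
          push_cast at this
          linarith
        have hs : x - (k1:ℝ) < -1/8 := by linarith [h2.2]
        have hNub : ((k3 - 3*k1 : ℤ):ℝ) < 0 := by push_cast; linarith [h3.2]
        have hNlb : (-1 : ℝ) < ((k3 - 3*k1 : ℤ):ℝ) := by push_cast; linarith [h1.1, h3.1]
        have hN1 : k3 - 3*k1 < 0 := by exact_mod_cast hNub
        have hN2 : -1 < k3 - 3*k1 := by exact_mod_cast hNlb
        omega
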